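/- There exist Büchi automata 𝒜, ℬ over Σ = {a,b} with σ(a)=1, σ(b)=2 such that Duplicator wins the two-buffer simulation game with capacities (ω,1) when allowed to consume more than one letter per round, but loses if restricted to consuming at most one letter per round. -/

import Mathlib

open scoped Classical

/-- A Büchi automaton over alphabet `S`. -/
structure BA (S : Type) where
  Q : Type
  init : Q
  trans : Q → S → Q → Prop
  acc : Q → Prop

/-- The Büchi language of `A`: infinite words with a run from the initial state
visiting accepting states infinitely often. -/
def BA.Lang {S : Type} (A : BA S) : Set (ℕ → S) :=
  { w | ∃ ρ : ℕ → A.Q, ρ 0 = A.init ∧ (∀ n, A.trans (ρ n) (w n) (ρ (n+1))) ∧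
        ∀ n, ∃ m, n ≤ m ∧ A.acc (ρ m) }

/-- A configuration of the two-buffer simulation game: Spoiler's state, contents of
the two FIFO buffers (head = oldest letter), Duplicator's state. -/
structure Cfg {S : Type} (A B : BA S) where
  qa : A.Q
  b1 : List S
  b2 : List S
  qb : B.Q

/-- The configuration after Spoiler's move `m = (a, q')`: his state becomes `q'` and
the letter `a` is appended to buffer `σ a` (`true` = buffer 1, `false` = buffer 2). -/
def midCfg {S : Type} {A B : BA S} (σ : S → Bool) (c : Cfg A B) (m : S × A.Q) : Cfg A B :=
  ⟨m.2, if σ m.1 then c.b1 ++ [m.1] else c.b1, if σ m.1 then c.b2 else c.b2 ++ [m.1], c.qb⟩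

/-- Applying a finite sequence of Duplicator consumption steps: each step picks a buffer
(`true` = buffer 1) and a successor state, consuming the oldest letter of that buffer
along a matching transition of `B`.  Returns `none` if some step is illegal. -/
noncomputable def dupApply {S : Type} (A B : BA S) :
    Cfg A B → List (Bool × B.Q) → Option (Cfg A B)
  | c, [] => some c
  | c, (j, p') :: ms =>
    if j then
      match c.b1 with
      | [] => none
      | b :: β => if B.trans c.qb b p' then dupApply A B ⟨c.qa, β, c.b2, p'⟩ ms else none
    else
      match c.b2 with
      | [] => none
      | b :: β => if B.trans c.qb b p' then dupApply A B ⟨c.qa, c.b1, β, p'⟩ ms else none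

/-- The configuration at the start of round `n` (i.e. after Duplicator's moves of
round `n-1`), given Spoiler's moves `sp` and Duplicator's responses `dm`;
`none` once an illegal move has occurred. -/
noncomputable def playCfg {S : Type} (A B : BA S) (σ : S → Bool)
    (sp : ℕ → S × A.Q) (dm : ℕ → List (Bool × B.Q)) : ℕ → Option (Cfg A B)
  | 0 => some ⟨A.init, [], [], B.init⟩
  | n+1 =>
    match playCfg A B σ sp dm n with
    | none => none
    | some c =>
      if A.trans c.qa (sp n).1 (sp n).2 then dupApply A B (midCfg σ c (sp n)) (dm n) else none

/-- Number of letters put into buffer `j` by Spoiler during the first `n` rounds. -/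
noncomputable def pushed {S : Type} {QA : Type} (σ : S → Bool) (sp : ℕ → S × QA)
    (j : Bool) (n : ℕ) : ℕ :=
  ((Finset.range n).filter fun i => σ (sp i).1 = j).card

/-- Number of letters consumed from buffer `j` by Duplicator during the first `n` rounds. -/
noncomputable def consumed {QB : Type} (dm : ℕ → List (Bool × QB)) (j : Bool) (n : ℕ) : ℕ :=
  ∑ i ∈ Finset.range n, ((dm i).filter fun x => x.1 = j).length

/-- Duplicator's strategy is consistent with the moves `dm` of a play. -/
def Consistent {S : Type} (A B : BA S)
    (dstrat : List ((S × A.Q) × List (Bool × B.Q)) → (S × A.Q) → List (Bool × B.Q))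
    (sp : ℕ → S × A.Q) (dm : ℕ → List (Bool × B.Q)) : Prop :=
  ∀ n, dm n = dstrat (List.ofFn fun i : Fin n => (sp i, dm i)) (sp n)

/-- Spoiler's moves are legal as long as the play is defined. -/
def SpLegal {S : Type} (A B : BA S) (σ : S → Bool)
    (sp : ℕ → S × A.Q) (dm : ℕ → List (Bool × B.Q)) : Prop :=
  ∀ n c, playCfg A B σ sp dm n = some c → A.trans c.qa (sp n).1 (sp n).2

/-- Duplicator's winning condition for a play of the two-buffer game with
capacities `(k1, k2)`: the buffers never exceed their capacities (checked after her
moves), and either Spoiler's run visits accepting states only finitely often, or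
every letter put into a buffer is eventually consumed and Duplicator's run visits
accepting states infinitely often. -/
def Win2 {S : Type} (A B : BA S) (σ : S → Bool) (k1 k2 : ℕ∞)
    (sp : ℕ → S × A.Q) (dm : ℕ → List (Bool × B.Q)) : Prop :=
  (∀ n c, playCfg A B σ sp dm n = some c →
      (c.b1.length : ℕ∞) ≤ k1 ∧ (c.b2.length : ℕ∞) ≤ k2) ∧
  ((∃ N, ∀ n, N ≤ n → ¬ A.acc (sp n).2) ∨
    ((∀ n j, ∃ m, pushed σ sp j n ≤ consumed dm j m) ∧
     (∀ n, ∃ m, n ≤ m ∧ ∃ x ∈ dm m, B.acc x.2)))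

/-- `dstrat` is a winning strategy for Duplicator in the two-buffer simulation game on
`A`, `B` with letter distribution `σ` and capacities `(k1, k2)`: against every legal
behaviour of Spoiler, all of Duplicator's prescribed moves are legal (the play never
breaks) and the resulting play is won by Duplicator. -/
def WinningStrat2 {S : Type} (A B : BA S) (σ : S → Bool) (k1 k2 : ℕ∞)
    (dstrat : List ((S × A.Q) × List (Bool × B.Q)) → (S × A.Q) → List (Bool × B.Q)) : Prop :=
  ∀ sp dm, Consistent A B dstrat sp dm → SpLegal A B σ sp dm →
    (∀ n, (playCfg A B σ sp dm n).isSome) ∧ Win2 A B σ k1 k2 sp dm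

/-- Two-buffer simulation `A ⊑(k1,k2) B`: Duplicator has a winning strategy. -/
def Sim2 {S : Type} (A B : BA S) (σ : S → Bool) (k1 k2 : ℕ∞) : Prop :=
  ∃ dstrat, WinningStrat2 A B σ k1 k2 dstrat
/-- Two-buffer game, variant in which Duplicator consumes at most one letter per
round: her move is `none` (skip) or `some (j, p')` (consume the oldest letter of
buffer `j`, moving to `p'`). -/
noncomputable def playCfg2One {S : Type} (A B : BA S) (σ : S → Bool)
    (sp : ℕ → S × A.Q) (dm : ℕ → Option (Bool × B.Q)) : ℕ → Option (Cfg A B)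
  | 0 => some ⟨A.init, [], [], B.init⟩
  | n+1 =>
    match playCfg2One A B σ sp dm n with
    | none => none
    | some c =>
      if A.trans c.qa (sp n).1 (sp n).2 then
        dupApply A B (midCfg σ c (sp n)) (dm n).toList
      else none

/-- Two-buffer simulation with capacities `(k1, k2)` in the variant where Duplicator
may consume at most one letter per round. -/
def Sim2One {S : Type} (A B : BA S) (σ : S → Bool) (k1 k2 : ℕ∞) : Prop :=
  ∃ dstrat : List ((S × A.Q) × Option (Bool × B.Q)) → (S × A.Q) → Option (Bool × B.Q),
    ∀ sp dm, (∀ n, dm n = dstrat (List.ofFn fun i : Fin n => (sp i, dm i)) (sp n)) →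
      (∀ n c, playCfg2One A B σ sp dm n = some c → A.trans c.qa (sp n).1 (sp n).2) →
      (∀ n, (playCfg2One A B σ sp dm n).isSome) ∧
      ((∀ n c, playCfg2One A B σ sp dm n = some c →
          (c.b1.length : ℕ∞) ≤ k1 ∧ (c.b2.length : ℕ∞) ≤ k2) ∧
       ((∃ N, ∀ n, N ≤ n → ¬ A.acc (sp n).2) ∨
         ((∀ n j, ∃ m, pushed σ sp j n ≤ consumed (fun i => (dm i).toList) j m) ∧
          (∀ n, ∃ m, n ≤ m ∧ ∃ x ∈ dm m, B.acc x.2))))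

/-- The alphabet `{a, b}`. -/
inductive L15 | a | b
deriving DecidableEq

/-- `a` goes to (unbounded) buffer 1, `b` to buffer 2 (of capacity 1). -/
def σ15 : L15 → Bool | .a => true | .b => false

/-- The automaton `𝒜`: states `q0, …, q5` with `q4, q5` accepting. -/
def A15 : BA L15 where
  Q := Fin 6
  init := 0
  acc := fun q => q = 4 ∨ q = 5
  trans := fun q x q' =>
    (q = 0 ∧ x = .a ∧ q' = 1) ∨ (q = 1 ∧ x = .a ∧ q' = 2) ∨
    (q = 2 ∧ x = .b ∧ q' = 3) ∨ (q = 3 ∧ x = .b ∧ (q' = 4 ∨ q' = 5)) ∨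
    (q = 4 ∧ x = .a ∧ q' = 4) ∨ (q = 5 ∧ x = .b ∧ q' = 5)

/-- The automaton `ℬ`: states `p0, …, p8` with `p4, p8` accepting. -/
def B15 : BA L15 where
  Q := Fin 9
  init := 0
  acc := fun q => q = 4 ∨ q = 8
  trans := fun q x q' =>
    (q = 0 ∧ x = .a ∧ (q' = 1 ∨ q' = 5)) ∨ (q = 1 ∧ x = .b ∧ q' = 2) ∨
    (q = 2 ∧ x = .a ∧ q' = 3) ∨ (q = 3 ∧ x = .b ∧ q' = 4) ∨ (q = 4 ∧ x = .a ∧ q' = 4) ∨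
    (q = 5 ∧ x = .b ∧ q' = 6) ∨ (q = 6 ∧ x = .a ∧ q' = 7) ∨ (q = 7 ∧ x = .b ∧ q' = 8) ∨
    (q = 8 ∧ x = .b ∧ q' = 8)

instance (i : ℕ) : OfNat A15.Q i := (inferInstance : OfNat (Fin 6) i)
instance (i : ℕ) : OfNat B15.Q i := (inferInstance : OfNat (Fin 9) i)

def pathA : List (Bool × Fin 9) := [(true,1),(false,2),(true,3),(false,4)]
def pathB : List (Bool × Fin 9) := [(true,5),(false,6),(true,7),(false,8)]

noncomputable def dstrat15 (h : List ((L15 × Fin 6) × List (Bool × Fin 9))) (m : L15 × Fin 6) : List (Bool × Fin 9) :=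
  if h.length < 3 then []
  else if h.length = 3 then (if m.2 = (4:Fin 6) then pathA else pathB)
  else if m.1 = L15.a then [(true,(4:Fin 9))] else [(false,(8:Fin 9))]

def spA : ℕ → L15 × A15.Q
  | 0 => (.a,1) | 1 => (.a,2) | 2 => (.b,3) | 3 => (.b,4) | _+4 => (.a,4)
def dmA : ℕ → List (Bool × B15.Q)
  | 0 => [] | 1 => [] | 2 => [] | 3 => pathA | _+4 => [(true,4)]
def cfgA : ℕ → Cfg A15 B15
  | 0 => ⟨0,[],[],0⟩ | 1 => ⟨1,[.a],[],0⟩ | 2 => ⟨2,[.a,.a],[],0⟩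
  | 3 => ⟨3,[.a,.a],[.b],0⟩ | _+4 => ⟨4,[],[],4⟩

lemma pstep (sp dm n c) (h : playCfg A15 B15 σ15 sp dm n = some c) :
    playCfg A15 B15 σ15 sp dm (n+1) =
      if A15.trans c.qa (sp n).1 (sp n).2 then dupApply A15 B15 (midCfg σ15 c (sp n)) (dm n)
      else none := by
  simp [playCfg, h]

example (sp dm) (h0 : sp 0 = spA 0) (hd : dm 0 = []) :
    playCfg A15 B15 σ15 sp dm 1 = some (cfgA 1) := by
  rw [pstep sp dm 0 ⟨0,[],[],0⟩ rfl]
  simp [h0, hd, spA, cfgA, midCfg, σ15, dupApply, A15]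

-- transition characterization lemmas
lemma trA0 (x) (q' : Fin 6) (h : A15.trans 0 x q') : x = .a ∧ q' = 1 := by simp [A15] at h; tauto
lemma trA1 (x) (q' : Fin 6) (h : A15.trans 1 x q') : x = .a ∧ q' = 2 := by simp [A15] at h; tauto
lemma trA2 (x) (q' : Fin 6) (h : A15.trans 2 x q') : x = .b ∧ q' = 3 := by simp [A15] at h; tauto
lemma trA3 (x) (q' : Fin 6) (h : A15.trans 3 x q') : x = .b ∧ (q' = 4 ∨ q' = 5) := by simp [A15] at h; tauto
lemma trA4 (x) (q' : Fin 6) (h : A15.trans 4 x q') : x = .a ∧ q' = 4 := by simp [A15] at h; tauto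
lemma trA5 (x) (q' : Fin 6) (h : A15.trans 5 x q') : x = .b ∧ q' = 5 := by simp [A15] at h; tauto

lemma consA_true (n : ℕ) : consumed dmA true (n+4) = n+2 := by
  induction n with
  | zero => simp [consumed, dmA, pathA, Finset.sum_range_succ]; rfl
  | succ n ih =>
    have : n+1+4 = (n+4)+1 := by omega
    rw [this, consumed, Finset.sum_range_succ, ← consumed, ih]
    simp [dmA]

lemma consA_false (n : ℕ) : consumed dmA false (n+4) = 2 := by
  induction n with
  | zero => simp [consumed, dmA, pathA, Finset.sum_range_succ]; rfl
  | succ n ih =>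
    have : n+1+4 = (n+4)+1 := by omega
    rw [this, consumed, Finset.sum_range_succ, ← consumed, ih]
    simp [dmA]

lemma pushed_le (σ : L15 → Bool) (sp : ℕ → L15 × A15.Q) (j n) : pushed σ sp j n ≤ n := by
  simpa [pushed] using Finset.card_filter_le (Finset.range n) _

lemma pushA_false (n : ℕ) : pushed σ15 spA false n ≤ 2 := by
  have : (Finset.range n).filter (fun i => σ15 (spA i).1 = false) ⊆ ({2,3} : Finset ℕ) := by
    intro i hi
    simp only [Finset.mem_filter, Finset.mem_range] at hi
    rcases hi with ⟨-, hv⟩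
    match i with
    | 0 | 1 => simp [spA, σ15] at hv
    | 2 => simp
    | 3 => simp
    | (k+4) => simp [spA, σ15] at hv
  calc pushed σ15 spA false n ≤ ({2,3} : Finset ℕ).card := Finset.card_le_card this
  _ = 2 := by decide

def spB : ℕ → L15 × A15.Q
  | 0 => (.a,1) | 1 => (.a,2) | 2 => (.b,3) | 3 => (.b,5) | _+4 => (.b,5)
def dmB : ℕ → List (Bool × B15.Q)
  | 0 => [] | 1 => [] | 2 => [] | 3 => pathB | _+4 => [(false,8)]
def cfgB : ℕ → Cfg A15 B15
  | 0 => ⟨0,[],[],0⟩ | 1 => ⟨1,[.a],[],0⟩ | 2 => ⟨2,[.a,.a],[],0⟩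
  | 3 => ⟨3,[.a,.a],[.b],0⟩ | _+4 => ⟨5,[],[],8⟩

lemma consB_false (n : ℕ) : consumed dmB false (n+4) = n+2 := by
  induction n with
  | zero => simp [consumed, dmB, pathB, Finset.sum_range_succ]; rfl
  | succ n ih =>
    have : n+1+4 = (n+4)+1 := by omega
    rw [this, consumed, Finset.sum_range_succ, ← consumed, ih]
    simp [dmB]

lemma consB_true (n : ℕ) : consumed dmB true (n+4) = 2 := by
  induction n with
  | zero => simp [consumed, dmB, pathB, Finset.sum_range_succ]; rfl
  | succ n ih =>
    have : n+1+4 = (n+4)+1 := by omega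
    rw [this, consumed, Finset.sum_range_succ, ← consumed, ih]
    simp [dmB]

lemma pushB_true (n : ℕ) : pushed σ15 spB true n ≤ 2 := by
  have : (Finset.range n).filter (fun i => σ15 (spB i).1 = true) ⊆ ({0,1} : Finset ℕ) := by
    intro i hi
    simp only [Finset.mem_filter, Finset.mem_range] at hi
    rcases hi with ⟨-, hv⟩
    match i with
    | 0 => simp
    | 1 => simp
    | 2 | 3 => simp [spB, σ15] at hv
    | (k+4) => simp [spB, σ15] at hv
  calc pushed σ15 spB true n ≤ ({0,1} : Finset ℕ).card := Finset.card_le_card this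
  _ = 2 := by decide

lemma part1 : Sim2 A15 B15 σ15 ⊤ 1 := by
  refine ⟨dstrat15, ?_⟩
  intro sp dm hC hL
  have hc0 : playCfg A15 B15 σ15 sp dm 0 = some (cfgA 0) := rfl
  have hsp0 : sp 0 = (.a, (1:Fin 6)) := by
    have := trA0 _ _ (hL 0 _ hc0); exact Prod.ext this.1 this.2
  have hdm0 : dm 0 = [] := by rw [hC 0]; simp [dstrat15]; rfl
  have hc1 : playCfg A15 B15 σ15 sp dm 1 = some (cfgA 1) := by
    rw [pstep sp dm 0 _ hc0]
    simp [hsp0, hdm0, cfgA, midCfg, σ15, dupApply, A15]; rfl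
  have hsp1 : sp 1 = (.a, (2:Fin 6)) := by
    have := trA1 _ _ (hL 1 _ hc1); exact Prod.ext this.1 this.2
  have hdm1 : dm 1 = [] := by rw [hC 1]; simp [dstrat15]; rfl
  have hc2 : playCfg A15 B15 σ15 sp dm 2 = some (cfgA 2) := by
    rw [pstep sp dm 1 _ hc1]
    simp [hsp1, hdm1, cfgA, midCfg, σ15, dupApply, A15]; rfl
  have hsp2 : sp 2 = (.b, (3:Fin 6)) := by
    have := trA2 _ _ (hL 2 _ hc2); exact Prod.ext this.1 this.2
  have hdm2 : dm 2 = [] := by rw [hC 2]; simp [dstrat15]; rfl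
  have hc3 : playCfg A15 B15 σ15 sp dm 3 = some (cfgA 3) := by
    rw [pstep sp dm 2 _ hc2]
    simp [hsp2, hdm2, cfgA, midCfg, σ15, dupApply, A15]; rfl
  have hsp3 := trA3 _ _ (hL 3 _ hc3)
  rcases hsp3 with ⟨hx3, hq4 | hq5⟩
  · -- branch A
    have hsp3 : sp 3 = (.b, (4:Fin 6)) := Prod.ext hx3 hq4
    have hdm3 : dm 3 = pathA := by
      rw [hC 3]; simp [dstrat15, hsp3]; rfl
    have tail : ∀ k, playCfg A15 B15 σ15 sp dm (k+4) = some (⟨4,[],[],4⟩ : Cfg A15 B15)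
        ∧ sp (k+4) = (.a, (4:Fin 6)) ∧ dm (k+4) = [(true,4)] := by
      intro k
      induction k with
      | zero =>
        have hc4 : playCfg A15 B15 σ15 sp dm 4 = some (⟨4,[],[],4⟩ : Cfg A15 B15) := by
          rw [pstep sp dm 3 _ hc3]
          simp [hsp3, hdm3, cfgA, midCfg, σ15, dupApply, A15, B15, pathA]; rfl
        have hsp4 : sp 4 = (.a, (4:Fin 6)) := by
          have := trA4 _ _ (hL 4 _ hc4); exact Prod.ext this.1 this.2
        have hdm4 : dm 4 = [(true,4)] := by
          rw [hC 4]; simp only [dstrat15]; erw [List.length_ofFn]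
          rw [if_neg (by omega), if_neg (by omega), hsp4, if_pos rfl]; rfl
        exact ⟨hc4, hsp4, hdm4⟩
      | succ k ih =>
        obtain ⟨hck, hspk, hdmk⟩ := ih
        have hc' : playCfg A15 B15 σ15 sp dm (k+1+4) = some (⟨4,[],[],4⟩ : Cfg A15 B15) := by
          have : k+1+4 = (k+4)+1 := by omega
          rw [this, pstep sp dm (k+4) _ hck]
          simp [hspk, hdmk, midCfg, σ15, dupApply, A15, B15]; rfl
        have hsp' : sp (k+1+4) = (.a, (4:Fin 6)) := by
          have := trA4 _ _ (hL (k+1+4) _ hc'); exact Prod.ext this.1 this.2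
        have hdm' : dm (k+1+4) = [(true,4)] := by
          rw [hC (k+1+4)]; simp only [dstrat15]; erw [List.length_ofFn]
          rw [if_neg (by omega), if_neg (by omega), hsp', if_pos rfl]; rfl
        exact ⟨hc', hsp', hdm'⟩
    have hall : ∀ n, playCfg A15 B15 σ15 sp dm n = some (cfgA n) := by
      intro n
      match n with
      | 0 => exact hc0 | 1 => exact hc1 | 2 => exact hc2 | 3 => exact hc3
      | (k+4) => exact (tail k).1
    have hspA : sp = spA := by
      funext n
      match n with
      | 0 => exact hsp0 | 1 => exact hsp1 | 2 => exact hsp2 | 3 => exact hsp3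
      | (k+4) => exact (tail k).2.1
    have hdmA : dm = dmA := by
      funext n
      match n with
      | 0 => exact hdm0 | 1 => exact hdm1 | 2 => exact hdm2 | 3 => exact hdm3
      | (k+4) => exact (tail k).2.2
    refine ⟨fun n => by rw [hall n]; rfl, ?_, ?_⟩
    · intro n c hc
      rw [hall n] at hc
      injection hc with hc; subst hc
      constructor
      · exact le_top
      · match n with
        | 0 | 1 | 2 => simp [cfgA]
        | 3 => simp [cfgA]
        | (k+4) => simp [cfgA]
    · right
      subst hspA hdmA
      constructor
      · intro n j
        refine ⟨n+4, ?_⟩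
        cases j
        · calc pushed σ15 spA false n ≤ 2 := pushA_false n
          _ ≤ consumed dmA false (n+4) := by rw [consA_false]
        · calc pushed σ15 spA true n ≤ n := pushed_le _ _ _ _
          _ ≤ consumed dmA true (n+4) := by rw [consA_true]; omega
      · intro n
        refine ⟨n+4, by omega, (true,4), ?_, ?_⟩
        · simp [dmA]
        · simp [B15]
  · -- branch B
    have hsp3 : sp 3 = (.b, (5:Fin 6)) := Prod.ext hx3 hq5
    have hdm3 : dm 3 = pathB := by
      rw [hC 3]; simp [dstrat15, hsp3]; rfl
    have tail : ∀ k, playCfg A15 B15 σ15 sp dm (k+4) = some (⟨5,[],[],8⟩ : Cfg A15 B15)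
        ∧ sp (k+4) = (.b, (5:Fin 6)) ∧ dm (k+4) = [(false,8)] := by
      intro k
      induction k with
      | zero =>
        have hc4 : playCfg A15 B15 σ15 sp dm 4 = some (⟨5,[],[],8⟩ : Cfg A15 B15) := by
          rw [pstep sp dm 3 _ hc3]
          simp [hsp3, hdm3, cfgA, midCfg, σ15, dupApply, A15, B15, pathB]; rfl
        have hsp4 : sp 4 = (.b, (5:Fin 6)) := by
          have := trA5 _ _ (hL 4 _ hc4); exact Prod.ext this.1 this.2
        have hdm4 : dm 4 = [(false,8)] := by
          rw [hC 4]; simp only [dstrat15]; erw [List.length_ofFn]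
          rw [if_neg (by omega), if_neg (by omega), hsp4, if_neg (by simp)]; rfl
        exact ⟨hc4, hsp4, hdm4⟩
      | succ k ih =>
        obtain ⟨hck, hspk, hdmk⟩ := ih
        have hc' : playCfg A15 B15 σ15 sp dm (k+1+4) = some (⟨5,[],[],8⟩ : Cfg A15 B15) := by
          have : k+1+4 = (k+4)+1 := by omega
          rw [this, pstep sp dm (k+4) _ hck]
          simp [hspk, hdmk, midCfg, σ15, dupApply, A15, B15]; rfl
        have hsp' : sp (k+1+4) = (.b, (5:Fin 6)) := by
          have := trA5 _ _ (hL (k+1+4) _ hc'); exact Prod.ext this.1 this.2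
        have hdm' : dm (k+1+4) = [(false,8)] := by
          rw [hC (k+1+4)]; simp only [dstrat15]; erw [List.length_ofFn]
          rw [if_neg (by omega), if_neg (by omega), hsp', if_neg (by simp)]; rfl
        exact ⟨hc', hsp', hdm'⟩
    have hall : ∀ n, playCfg A15 B15 σ15 sp dm n = some (cfgB n) := by
      intro n
      match n with
      | 0 => exact hc0 | 1 => exact hc1 | 2 => exact hc2 | 3 => exact hc3
      | (k+4) => exact (tail k).1
    have hspB : sp = spB := by
      funext n
      match n with
      | 0 => exact hsp0 | 1 => exact hsp1 | 2 => exact hsp2 | 3 => exact hsp3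
      | (k+4) => exact (tail k).2.1
    have hdmB : dm = dmB := by
      funext n
      match n with
      | 0 => exact hdm0 | 1 => exact hdm1 | 2 => exact hdm2 | 3 => exact hdm3
      | (k+4) => exact (tail k).2.2
    refine ⟨fun n => by rw [hall n]; rfl, ?_, ?_⟩
    · intro n c hc
      rw [hall n] at hc
      injection hc with hc; subst hc
      constructor
      · exact le_top
      · match n with
        | 0 | 1 | 2 => simp [cfgB]
        | 3 => simp [cfgB]
        | (k+4) => simp [cfgB]
    · right
      subst hspB hdmB
      constructor
      · intro n j
        refine ⟨n+4, ?_⟩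
        cases j
        · calc pushed σ15 spB false n ≤ n := pushed_le _ _ _ _
          _ ≤ consumed dmB false (n+4) := by rw [consB_false]; omega
        · calc pushed σ15 spB true n ≤ 2 := pushB_true n
          _ ≤ consumed dmB true (n+4) := by rw [consB_true]
      · intro n
        refine ⟨n+4, by omega, (false,8), ?_, ?_⟩
        · simp [dmB]
        · simp [B15]

-- ===== Part 2 infrastructure =====
lemma dup_qa {S} {A B : BA S} : ∀ (ms : List (Bool × B.Q)) (c c' : Cfg A B),
    dupApply A B c ms = some c' → c'.qa = c.qa := by
  intro ms
  induction ms with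
  | nil => intro c c' h; simp [dupApply] at h; rw [← h]
  | cons m ms ih =>
    rintro ⟨qa, b1, b2, qb⟩ c' h
    obtain ⟨j, p⟩ := m
    cases j
    · cases b2 with
      | nil => simp [dupApply] at h
      | cons x t =>
        simp [dupApply] at h
        exact (ih _ _ h.2).trans rfl
    · cases b1 with
      | nil => simp [dupApply] at h
      | cons x t =>
        simp [dupApply] at h
        exact (ih _ _ h.2).trans rfl

lemma dup_mem {S} {A B : BA S} : ∀ (ms : List (Bool × B.Q)) (c c' : Cfg A B),
    dupApply A B c ms = some c' →
    (∀ x ∈ c'.b1, x ∈ c.b1) ∧ (∀ x ∈ c'.b2, x ∈ c.b2) := by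
  intro ms
  induction ms with
  | nil => intro c c' h; simp [dupApply] at h; rw [← h]; exact ⟨fun x hx => hx, fun x hx => hx⟩
  | cons m ms ih =>
    rintro ⟨qa, b1, b2, qb⟩ c' h
    obtain ⟨j, p⟩ := m
    cases j
    · cases b2 with
      | nil => simp [dupApply] at h
      | cons x t =>
        simp [dupApply] at h
        obtain ⟨h1, h2⟩ := ih _ _ h.2
        exact ⟨h1, fun y hy => List.mem_cons_of_mem _ (h2 y hy)⟩
    · cases b1 with
      | nil => simp [dupApply] at h
      | cons x t =>
        simp [dupApply] at h
        obtain ⟨h1, h2⟩ := ih _ _ h.2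
        exact ⟨fun y hy => List.mem_cons_of_mem _ (h1 y hy), h2⟩

lemma pstep2 (sp dm n c) (h : playCfg2One A15 B15 σ15 sp dm n = some c) :
    playCfg2One A15 B15 σ15 sp dm (n+1) =
      if A15.trans c.qa (sp n).1 (sp n).2 then
        dupApply A15 B15 (midCfg σ15 c (sp n)) (dm n).toList
      else none := by
  simp [playCfg2One, h]

lemma pstep2_inv (sp dm n c') (h : playCfg2One A15 B15 σ15 sp dm (n+1) = some c') :
    ∃ c, playCfg2One A15 B15 σ15 sp dm n = some c ∧ A15.trans c.qa (sp n).1 (sp n).2 ∧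
      dupApply A15 B15 (midCfg σ15 c (sp n)) (dm n).toList = some c' := by
  cases hc : playCfg2One A15 B15 σ15 sp dm n with
  | none => rw [playCfg2One, hc] at h; simp at h
  | some c =>
    rw [pstep2 sp dm n c hc] at h
    split at h
    · exact ⟨c, rfl, by assumption, h⟩
    · simp at h

lemma play_qa (sp dm) (n) (c') (h : playCfg2One A15 B15 σ15 sp dm (n+1) = some c') :
    c'.qa = (sp n).2 := by
  obtain ⟨c, -, -, hd⟩ := pstep2_inv sp dm n c' h
  rw [dup_qa _ _ _ hd]; rfl

lemma play_buf (sp dm) : ∀ n c, playCfg2One A15 B15 σ15 sp dm n = some c →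
    (∀ x ∈ c.b1, x = L15.a) ∧ (∀ x ∈ c.b2, x = L15.b) := by
  intro n
  induction n with
  | zero => intro c h; rw [playCfg2One] at h; injection h with h; rw [← h]; simp
  | succ n ih =>
    intro c' h
    obtain ⟨c, hc, -, hd⟩ := pstep2_inv sp dm n c' h
    obtain ⟨ih1, ih2⟩ := ih c hc
    obtain ⟨h1, h2⟩ := dup_mem _ _ _ hd
    constructor
    · intro x hx
      have := h1 x hx
      simp only [midCfg] at this
      rcases hsig : σ15 (sp n).1 with hv | hv
      · rw [hsig] at this; simp at this; exact ih1 x this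
      · rw [hsig] at this; simp at this
        rcases this with h | h
        · exact ih1 x h
        · subst h; cases hx2 : (sp n).1 <;> simp [σ15, hx2] at hsig ⊢
    · intro x hx
      have := h2 x hx
      simp only [midCfg] at this
      rcases hsig : σ15 (sp n).1 with hv | hv
      · rw [hsig] at this
        simp at this
        rcases this with h | h
        · exact ih2 x h
        · subst h; cases hx2 : (sp n).1 <;> simp [σ15, hx2] at hsig ⊢
      · rw [hsig] at this; simp at this; exact ih2 x this

lemma trB0 {x} {p : Fin 9} (h : B15.trans 0 x p) : x = .a ∧ (p = 1 ∨ p = 5) := by simp [B15] at h; tauto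
lemma trB1 {x} {p : Fin 9} (h : B15.trans 1 x p) : x = .b ∧ p = 2 := by simp [B15] at h; tauto
lemma trB2 {x} {p : Fin 9} (h : B15.trans 2 x p) : x = .a ∧ p = 3 := by simp [B15] at h; tauto
lemma trB3 {x} {p : Fin 9} (h : B15.trans 3 x p) : x = .b ∧ p = 4 := by simp [B15] at h; tauto
lemma trB4 {x} {p : Fin 9} (h : B15.trans 4 x p) : x = .a ∧ p = 4 := by simp [B15] at h; tauto
lemma trB5 {x} {p : Fin 9} (h : B15.trans 5 x p) : x = .b ∧ p = 6 := by simp [B15] at h; tauto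
lemma trB6 {x} {p : Fin 9} (h : B15.trans 6 x p) : x = .a ∧ p = 7 := by simp [B15] at h; tauto
lemma trB7 {x} {p : Fin 9} (h : B15.trans 7 x p) : x = .b ∧ p = 8 := by simp [B15] at h; tauto
lemma trB8 {x} {p : Fin 9} (h : B15.trans 8 x p) : x = .b ∧ p = 8 := by simp [B15] at h; tauto

section Classes
variable (sp : ℕ → L15 × A15.Q) (dm : ℕ → Option (Bool × B15.Q))

-- round step from an explicit configuration where qb has no legal b-move at all
-- and the b-buffer would overflow: used repeatedly.
lemma class1
    (hc3 : playCfg2One A15 B15 σ15 sp dm 3 = some ⟨3,[.a],[.b],1⟩)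
    (hsp : ∀ n, 3 ≤ n → sp n = (.b,(5:Fin 6)))
    (H1 : ∀ n, (playCfg2One A15 B15 σ15 sp dm n).isSome)
    (H2 : ∀ n c, playCfg2One A15 B15 σ15 sp dm n = some c →
        (c.b1.length:ℕ∞) ≤ ⊤ ∧ (c.b2.length:ℕ∞) ≤ 1) :
    False := by
  obtain ⟨c4, hc4⟩ := Option.isSome_iff_exists.mp (H1 4)
  have hst := pstep2 sp dm 3 _ hc3
  rw [hsp 3 (by omega), if_pos (by simp [A15])] at hst
  simp only [midCfg, σ15] at hst
  rcases hd : dm 3 with _ | ⟨j,p⟩ <;> rw [hd] at hst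
  · simp only [Option.toList, dupApply] at hst
    have := (H2 4 _ hst).2
    simp at this
  · cases j
    · -- consume b : 1 -b-> 2, c4 = ⟨5,[a],[b],2⟩
      rw [hc4] at hst
      simp [dupApply] at hst
      obtain ⟨htr, hc4'⟩ := hst
      obtain ⟨-, hp⟩ := trB1 htr
      subst hp
      -- round 4
      obtain ⟨c5, hc5⟩ := Option.isSome_iff_exists.mp (H1 5)
      have hc4e : playCfg2One A15 B15 σ15 sp dm 4 = some ⟨5,[.a],[.b],2⟩ := by
        rw [hc4]; subst hc4'; rfl
      have hst2 := pstep2 sp dm 4 _ hc4e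
      rw [hsp 4 (by omega), if_pos (by simp [A15])] at hst2
      simp only [midCfg, σ15] at hst2
      rcases hd2 : dm 4 with _ | ⟨j,p⟩ <;> rw [hd2] at hst2
      · simp only [Option.toList, dupApply] at hst2
        have := (H2 5 _ hst2).2
        simp at this
      · cases j
        · rw [hc5] at hst2
          simp [dupApply] at hst2
          exact absurd (trB2 hst2.1).1 (by simp)
        · rw [hc5] at hst2
          simp [dupApply] at hst2
          obtain ⟨htr2, hc5'⟩ := hst2
          obtain ⟨-, hp⟩ := trB2 htr2
          subst hp
          have hc5e : playCfg2One A15 B15 σ15 sp dm 5 = some ⟨5,[],[.b,.b],3⟩ := by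
            rw [hc5]; subst hc5'; rfl
          have := (H2 5 _ hc5e).2
          simp at this
    · rw [hc4] at hst
      simp [dupApply] at hst
      exact absurd (trB1 hst.1).1 (by simp)

end Classes

section Classes2
variable (sp : ℕ → L15 × A15.Q) (dm : ℕ → Option (Bool × B15.Q))

lemma stuck4 (n : ℕ) (qa : Fin 6)
    (hc : playCfg2One A15 B15 σ15 sp dm n = some ⟨qa,[],[.b],4⟩)
    (htr : A15.trans qa (sp n).1 (sp n).2) (hspn : (sp n).1 = .b)
    (H1 : ∀ n, (playCfg2One A15 B15 σ15 sp dm n).isSome)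
    (H2 : ∀ n c, playCfg2One A15 B15 σ15 sp dm n = some c →
        (c.b1.length:ℕ∞) ≤ ⊤ ∧ (c.b2.length:ℕ∞) ≤ 1) : False := by
  obtain ⟨c', hc'⟩ := Option.isSome_iff_exists.mp (H1 (n+1))
  have hst := pstep2 sp dm n _ hc
  rw [if_pos htr] at hst
  simp only [midCfg, hspn, σ15] at hst
  rcases hd : dm n with _ | ⟨j,p⟩ <;> rw [hd] at hst
  · simp only [Option.toList, dupApply] at hst
    have := (H2 (n+1) _ hst).2
    simp at this
  · cases j
    · rw [hc'] at hst
      simp [dupApply] at hst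
      exact absurd (trB4 hst.1).1 (by simp)
    · rw [hc'] at hst
      simp [dupApply] at hst

lemma stuck3 (n : ℕ) (qa : Fin 6)
    (hc : playCfg2One A15 B15 σ15 sp dm n = some ⟨qa,[],[.b],3⟩)
    (htr : A15.trans qa (sp n).1 (sp n).2) (hspn : sp n = (.b,(5:Fin 6)))
    (hsp : ∀ m, n < m → sp m = (.b,(5:Fin 6)))
    (H1 : ∀ n, (playCfg2One A15 B15 σ15 sp dm n).isSome)
    (H2 : ∀ n c, playCfg2One A15 B15 σ15 sp dm n = some c →
        (c.b1.length:ℕ∞) ≤ ⊤ ∧ (c.b2.length:ℕ∞) ≤ 1) : False := by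
  obtain ⟨c', hc'⟩ := Option.isSome_iff_exists.mp (H1 (n+1))
  have hst := pstep2 sp dm n _ hc
  rw [if_pos htr] at hst
  simp only [midCfg, hspn, σ15] at hst
  rcases hd : dm n with _ | ⟨j,p⟩ <;> rw [hd] at hst
  · simp only [Option.toList, dupApply] at hst
    have := (H2 (n+1) _ hst).2
    simp at this
  · cases j
    · rw [hc'] at hst
      simp [dupApply] at hst
      obtain ⟨htr2, hc2⟩ := hst
      obtain ⟨-, hp⟩ := trB3 htr2
      subst hp
      refine stuck4 sp dm (n+1) 5 (by rw [hc']; subst hc2; rfl) ?_ ?_ H1 H2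
      · rw [hsp (n+1) (by omega)]; simp [A15]
      · rw [hsp (n+1) (by omega)]
    · rw [hc'] at hst
      simp [dupApply] at hst

lemma stuck2 (n : ℕ) (qa : Fin 6)
    (hc : playCfg2One A15 B15 σ15 sp dm n = some ⟨qa,[.a],[.b],2⟩)
    (htr : A15.trans qa (sp n).1 (sp n).2) (hspn : sp n = (.b,(5:Fin 6)))
    (hsp : ∀ m, n < m → sp m = (.b,(5:Fin 6)))
    (H1 : ∀ n, (playCfg2One A15 B15 σ15 sp dm n).isSome)
    (H2 : ∀ n c, playCfg2One A15 B15 σ15 sp dm n = some c →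
        (c.b1.length:ℕ∞) ≤ ⊤ ∧ (c.b2.length:ℕ∞) ≤ 1) : False := by
  obtain ⟨c', hc'⟩ := Option.isSome_iff_exists.mp (H1 (n+1))
  have hst := pstep2 sp dm n _ hc
  rw [if_pos htr] at hst
  simp only [midCfg, hspn, σ15] at hst
  rcases hd : dm n with _ | ⟨j,p⟩ <;> rw [hd] at hst
  · simp only [Option.toList, dupApply] at hst
    have := (H2 (n+1) _ hst).2
    simp at this
  · cases j
    · rw [hc'] at hst
      simp [dupApply] at hst
      exact absurd (trB2 hst.1).1 (by simp)
    · rw [hc'] at hst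
      simp [dupApply] at hst
      obtain ⟨htr2, hc2⟩ := hst
      obtain ⟨-, hp⟩ := trB2 htr2
      subst hp
      have := (H2 (n+1) _ (by rw [hc', hc2]; rfl :
        playCfg2One A15 B15 σ15 sp dm (n+1) = some ⟨5,[],[.b,.b],3⟩)).2
      simp at this

end Classes2

section Classes3
variable (sp : ℕ → L15 × A15.Q) (dm : ℕ → Option (Bool × B15.Q))

lemma class2
    (hc3 : playCfg2One A15 B15 σ15 sp dm 3 = some ⟨3,[.a],[],2⟩)
    (hsp : ∀ n, 3 ≤ n → sp n = (.b,(5:Fin 6)))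
    (H1 : ∀ n, (playCfg2One A15 B15 σ15 sp dm n).isSome)
    (H2 : ∀ n c, playCfg2One A15 B15 σ15 sp dm n = some c →
        (c.b1.length:ℕ∞) ≤ ⊤ ∧ (c.b2.length:ℕ∞) ≤ 1) : False := by
  obtain ⟨c', hc'⟩ := Option.isSome_iff_exists.mp (H1 4)
  have hst := pstep2 sp dm 3 _ hc3
  rw [hsp 3 (by omega), if_pos (by simp [A15])] at hst
  simp only [midCfg, σ15] at hst
  rcases hd : dm 3 with _ | ⟨j,p⟩ <;> rw [hd] at hst
  · simp only [Option.toList, dupApply] at hst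
    exact stuck2 sp dm 4 5 hst (by rw [hsp 4 (by omega)]; simp [A15])
      (hsp 4 (by omega)) (fun m hm => hsp m (by omega)) H1 H2
  · cases j
    · rw [hc'] at hst
      simp [dupApply] at hst
      exact absurd (trB2 hst.1).1 (by simp)
    · rw [hc'] at hst
      simp [dupApply] at hst
      obtain ⟨htr2, hc2⟩ := hst
      obtain ⟨-, hp⟩ := trB2 htr2
      subst hp
      exact stuck3 sp dm 4 5 (by rw [hc', hc2]; rfl) (by rw [hsp 4 (by omega)]; simp [A15])
        (hsp 4 (by omega)) (fun m hm => hsp m (by omega)) H1 H2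

lemma class0
    (hc3 : playCfg2One A15 B15 σ15 sp dm 3 = some ⟨3,[.a,.a],[.b],0⟩)
    (hsp3 : sp 3 = (.b,(4:Fin 6)))
    (H1 : ∀ n, (playCfg2One A15 B15 σ15 sp dm n).isSome)
    (H2 : ∀ n c, playCfg2One A15 B15 σ15 sp dm n = some c →
        (c.b1.length:ℕ∞) ≤ ⊤ ∧ (c.b2.length:ℕ∞) ≤ 1) : False := by
  obtain ⟨c', hc'⟩ := Option.isSome_iff_exists.mp (H1 4)
  have hst := pstep2 sp dm 3 _ hc3
  rw [hsp3, if_pos (by simp [A15])] at hst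
  simp only [midCfg, σ15] at hst
  rcases hd : dm 3 with _ | ⟨j,p⟩ <;> rw [hd] at hst
  · simp only [Option.toList, dupApply] at hst
    have := (H2 4 _ hst).2
    simp at this
  · cases j
    · rw [hc'] at hst
      simp [dupApply] at hst
      exact absurd (trB0 hst.1).1 (by simp)
    · rw [hc'] at hst
      simp [dupApply] at hst
      obtain ⟨htr2, hc2⟩ := hst
      have := (H2 4 _ (by rw [hc', hc2])).2
      simp at this

end Classes3

def pat (c : Cfg A15 B15) : Prop :=
  c.qa = (4:Fin 6) ∧ ((c.b2 = [.b] ∧ (c.qb = (6:Fin 9) ∨ c.qb = 7)) ∨ (c.b2 = [] ∧ c.qb = (8:Fin 9)))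

section Classes4
variable (sp : ℕ → L15 × A15.Q) (dm : ℕ → Option (Bool × B15.Q))

lemma invStep (n : ℕ) (hn : 4 ≤ n) (c) (hc : playCfg2One A15 B15 σ15 sp dm n = some c)
    (hp : pat c) (hsp : ∀ m, 4 ≤ m → sp m = (.a,(4:Fin 6)))
    (H1 : ∀ n, (playCfg2One A15 B15 σ15 sp dm n).isSome) :
    ∃ c', playCfg2One A15 B15 σ15 sp dm (n+1) = some c' ∧ pat c' ∧
      (c.qb = 8 → dm n = none ∧ c'.qb = 8) ∧
      (∀ x ∈ dm n, B15.acc x.2 → c'.qb = 8) := by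
  obtain ⟨c', hc'⟩ := Option.isSome_iff_exists.mp (H1 (n+1))
  have hbuf := (play_buf sp dm n c hc).1
  obtain ⟨qa, b1, b2, qb⟩ := c
  obtain ⟨hqa, hrest⟩ := hp
  simp only at hqa hbuf
  subst hqa
  have hst := pstep2 sp dm n _ hc
  rw [hsp n hn, if_pos (by simp [A15])] at hst
  simp only [midCfg, σ15] at hst
  refine ⟨c', hc', ?_⟩
  rcases hd : dm n with _ | ⟨j,p⟩ <;> rw [hd] at hst
  · -- skip
    simp only [Option.toList, dupApply] at hst
    rw [hc'] at hst
    injection hst with hst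
    subst hst
    rcases hrest with ⟨hb2, h67⟩ | ⟨hb2, h8⟩
    · refine ⟨⟨rfl, Or.inl ⟨hb2, h67⟩⟩, fun h8 => ?_, fun x hx => by simp at hx⟩
      rcases h67 with h|h
      · exact absurd (h.symm.trans h8) (by exact (by simp : ¬(6:Fin 9) = 8))
      · exact absurd (h.symm.trans h8) (by exact (by simp : ¬(7:Fin 9) = 8))
    · exact ⟨⟨rfl, Or.inr ⟨hb2, h8⟩⟩, fun _ => ⟨rfl, h8⟩, fun x hx => by simp at hx⟩
  · cases j
    · -- consume from buffer 2
      rcases hrest with ⟨hb2, h67⟩ | ⟨hb2, h8⟩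
      · subst hb2
        rw [hc'] at hst
        simp [dupApply] at hst
        obtain ⟨htr2, hc2⟩ := hst
        rcases h67 with h6 | h7
        · subst h6; exact absurd (trB6 htr2).1 (by simp)
        · subst h7
          obtain ⟨-, hp8⟩ := trB7 htr2
          subst hp8
          subst hc2
          exact ⟨⟨rfl, Or.inr ⟨rfl, rfl⟩⟩, fun h8 => absurd h8 (by exact (by simp : ¬(7:Fin 9) = 8)),
            fun x hx hacc => by rfl⟩
      · subst hb2
        subst h8
        rw [hc'] at hst
        simp [dupApply] at hst
    · -- consume from buffer 1
      have hhead : ∃ t, b1 ++ [L15.a] = L15.a :: t ∧ (∀ x ∈ t, x = L15.a) := by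
        cases b1 with
        | nil => exact ⟨[], rfl, by simp⟩
        | cons x t =>
          have hx := hbuf x (by simp)
          subst hx
          exact ⟨t ++ [L15.a], rfl, by
            intro y hy
            rcases List.mem_append.mp hy with h | h
            · exact hbuf y (List.mem_cons_of_mem _ h)
            · simpa using h⟩
      obtain ⟨t, hteq, -⟩ := hhead
      rw [hteq] at hst
      rw [hc'] at hst
      simp [dupApply] at hst
      obtain ⟨htr2, hc2⟩ := hst
      rcases hrest with ⟨hb2, h6 | h7⟩ | ⟨hb2, h8⟩
      · subst h6
        obtain ⟨-, hp7⟩ := trB6 htr2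
        subst hp7
        subst hc2 hb2
        exact ⟨⟨rfl, Or.inl ⟨rfl, Or.inr rfl⟩⟩, fun h8 => absurd h8 (by exact (by simp : ¬(6:Fin 9) = 8)),
          fun x hx hacc => by
            simp at hx
            subst hx
            simp [B15] at hacc⟩
      · subst h7; exact absurd (trB7 htr2).1 (by simp)
      · subst h8; exact absurd (trB8 htr2).1 (by simp)

end Classes4

section Classes5
variable (sp : ℕ → L15 × A15.Q) (dm : ℕ → Option (Bool × B15.Q))

lemma classEnd (c4) (hc4 : playCfg2One A15 B15 σ15 sp dm 4 = some c4) (hp4 : pat c4)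
    (hsp : ∀ m, 4 ≤ m → sp m = (.a,(4:Fin 6)))
    (H1 : ∀ n, (playCfg2One A15 B15 σ15 sp dm n).isSome)
    (Hacc : ∀ n, ∃ m, n ≤ m ∧ ∃ x ∈ dm m, B15.acc x.2) : False := by
  have inv : ∀ k, ∃ c, playCfg2One A15 B15 σ15 sp dm (k+4) = some c ∧ pat c := by
    intro k
    induction k with
    | zero => exact ⟨c4, hc4, hp4⟩
    | succ k ih =>
      obtain ⟨c, hc, hp⟩ := ih
      obtain ⟨c', hc', hp', -, -⟩ := invStep sp dm (k+4) (by omega) c hc hp hsp H1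
      exact ⟨c', hc', hp'⟩
  have patAll : ∀ n, 4 ≤ n → ∀ c, playCfg2One A15 B15 σ15 sp dm n = some c → pat c := by
    intro n hn c hc
    obtain ⟨c', hc', hp'⟩ := inv (n-4)
    rw [show n-4+4 = n by omega] at hc'
    rw [hc] at hc'
    injection hc' with hc'
    rw [hc']
    exact hp'
  obtain ⟨m1, hm1, x1, hx1, hacc1⟩ := Hacc 4
  obtain ⟨c, hc, hp⟩ := inv (m1-4)
  rw [show m1-4+4 = m1 by omega] at hc
  obtain ⟨c', hc', hp', -, h8⟩ := invStep sp dm m1 hm1 c hc hp hsp H1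
  have h8' : c'.qb = 8 := h8 x1 hx1 hacc1
  have pers : ∀ l, ∃ cc, playCfg2One A15 B15 σ15 sp dm (m1+1+l) = some cc ∧ cc.qb = 8 := by
    intro l
    induction l with
    | zero => exact ⟨c', hc', h8'⟩
    | succ l ih =>
      obtain ⟨cc, hcl, h8l⟩ := ih
      obtain ⟨cc', hcc', -, h8f, -⟩ := invStep sp dm (m1+1+l) (by omega) cc hcl
        (patAll _ (by omega) _ hcl) hsp H1
      exact ⟨cc', hcc', (h8f h8l).2⟩
  obtain ⟨m2, hm2, x2, hx2, hacc2⟩ := Hacc (m1+1)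
  obtain ⟨c2, hc2, h82⟩ := pers (m2 - (m1+1))
  rw [show m1+1+(m2-(m1+1)) = m2 by omega] at hc2
  obtain ⟨c9, h9a, h9b, h8f2, h9c⟩ := invStep sp dm m2 (by omega) c2 hc2
    (patAll _ (by omega) _ hc2) hsp H1
  rw [(h8f2 h82).1] at hx2
  simp at hx2

lemma class3
    (hc3 : playCfg2One A15 B15 σ15 sp dm 3 = some ⟨3,[.a],[.b],5⟩)
    (hsp3 : sp 3 = (.b,(4:Fin 6)))
    (hsp : ∀ m, 4 ≤ m → sp m = (.a,(4:Fin 6)))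
    (H1 : ∀ n, (playCfg2One A15 B15 σ15 sp dm n).isSome)
    (H2 : ∀ n c, playCfg2One A15 B15 σ15 sp dm n = some c →
        (c.b1.length:ℕ∞) ≤ ⊤ ∧ (c.b2.length:ℕ∞) ≤ 1)
    (Hacc : ∀ n, ∃ m, n ≤ m ∧ ∃ x ∈ dm m, B15.acc x.2) : False := by
  obtain ⟨c', hc'⟩ := Option.isSome_iff_exists.mp (H1 4)
  have hst := pstep2 sp dm 3 _ hc3
  rw [hsp3, if_pos (by simp [A15])] at hst
  simp only [midCfg, σ15] at hst
  rcases hd : dm 3 with _ | ⟨j,p⟩ <;> rw [hd] at hst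
  · simp only [Option.toList, dupApply] at hst
    have := (H2 4 _ hst).2
    simp at this
  · cases j
    · rw [hc'] at hst
      simp [dupApply] at hst
      obtain ⟨htr2, hc2⟩ := hst
      obtain ⟨-, hp6⟩ := trB5 htr2
      subst hp6
      refine classEnd sp dm _ (by rw [hc', hc2]) ?_ hsp H1 Hacc
      exact ⟨rfl, Or.inl ⟨rfl, Or.inl rfl⟩⟩
    · rw [hc'] at hst
      simp [dupApply] at hst
      exact absurd (trB5 hst.1).1 (by simp)

lemma class4
    (hc3 : playCfg2One A15 B15 σ15 sp dm 3 = some ⟨3,[.a],[],6⟩)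
    (hsp3 : sp 3 = (.b,(4:Fin 6)))
    (hsp : ∀ m, 4 ≤ m → sp m = (.a,(4:Fin 6)))
    (H1 : ∀ n, (playCfg2One A15 B15 σ15 sp dm n).isSome)
    (H2 : ∀ n c, playCfg2One A15 B15 σ15 sp dm n = some c →
        (c.b1.length:ℕ∞) ≤ ⊤ ∧ (c.b2.length:ℕ∞) ≤ 1)
    (Hacc : ∀ n, ∃ m, n ≤ m ∧ ∃ x ∈ dm m, B15.acc x.2) : False := by
  obtain ⟨c', hc'⟩ := Option.isSome_iff_exists.mp (H1 4)
  have hst := pstep2 sp dm 3 _ hc3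
  rw [hsp3, if_pos (by simp [A15])] at hst
  simp only [midCfg, σ15] at hst
  rcases hd : dm 3 with _ | ⟨j,p⟩ <;> rw [hd] at hst
  · simp only [Option.toList, dupApply] at hst
    refine classEnd sp dm _ hst ?_ hsp H1 Hacc
    exact ⟨rfl, Or.inl ⟨rfl, Or.inl rfl⟩⟩
  · cases j
    · rw [hc'] at hst
      simp [dupApply] at hst
      exact absurd (trB6 hst.1).1 (by simp)
    · rw [hc'] at hst
      simp [dupApply] at hst
      obtain ⟨htr2, hc2⟩ := hst
      obtain ⟨-, hp7⟩ := trB6 htr2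
      subst hp7
      refine classEnd sp dm _ (by rw [hc', hc2]) ?_ hsp H1 Hacc
      exact ⟨rfl, Or.inl ⟨rfl, Or.inr rfl⟩⟩

end Classes5

section Main2
variable (D : List ((L15 × A15.Q) × Option (Bool × B15.Q)) → (L15 × A15.Q) → Option (Bool × B15.Q))

noncomputable def d0 : Option (Bool × B15.Q) := D [] (.a,1)
noncomputable def d1 : Option (Bool × B15.Q) := D [((.a,1), d0 D)] (.a,2)
noncomputable def d2 : Option (Bool × B15.Q) :=
  D [((.a,1), d0 D), ((.a,2), d1 D)] (.b,3)

noncomputable def side : Bool :=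
  if d0 D = some (true,1) ∨ d1 D = some (true,1) ∨ d2 D = some (true,1) then true else false

noncomputable def sp2 (n : ℕ) : L15 × A15.Q :=
  if n = 0 then (.a,1) else if n = 1 then (.a,2) else if n = 2 then (.b,3)
  else if side D then (.b,5) else if n = 3 then (.b,4) else (.a,4)

noncomputable def hist : ℕ → List ((L15 × A15.Q) × Option (Bool × B15.Q))
  | 0 => []
  | n+1 => hist n ++ [(sp2 D n, D (hist n) (sp2 D n))]

noncomputable def dmf (n : ℕ) : Option (Bool × B15.Q) := D (hist D n) (sp2 D n)

lemma ofFn_hist : ∀ n, (List.ofFn fun i : Fin n => (sp2 D i, dmf D i)) = hist D n := by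
  intro n
  induction n with
  | zero => rfl
  | succ n ih =>
    rw [List.ofFn_succ']
    simp only [Fin.coe_castSucc, Fin.val_last, List.concat_eq_append]
    rw [ih, hist]
    rfl

lemma hcons : ∀ n, dmf D n = D (List.ofFn fun i : Fin n => (sp2 D i, dmf D i)) (sp2 D n) := by
  intro n; rw [ofFn_hist]; rfl

lemma dmf0 : dmf D 0 = d0 D := rfl
lemma dmf1 : dmf D 1 = d1 D := by
  show D (hist D 1) (sp2 D 1) = _
  simp [hist, sp2, d1, d0]
lemma dmf2 : dmf D 2 = d2 D := by
  show D (hist D 2) (sp2 D 2) = _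
  simp [hist, sp2, d2, d1, d0]

lemma sp2_0 : sp2 D 0 = (.a,1) := rfl
lemma sp2_1 : sp2 D 1 = (.a,2) := rfl
lemma sp2_2 : sp2 D 2 = (.b,3) := rfl
lemma sp2_3t (h : side D = true) : sp2 D 3 = (.b,5) := by simp [sp2, h]
lemma sp2_3f (h : side D = false) : sp2 D 3 = (.b,4) := by simp [sp2, h]
lemma sp2_ge3t (h : side D = true) (n) (hn : 3 ≤ n) : sp2 D n = (.b,5) := by
  rw [sp2, if_neg (by omega), if_neg (by omega), if_neg (by omega), h]; simp
lemma sp2_ge4f (h : side D = false) (n) (hn : 4 ≤ n) : sp2 D n = (.a,4) := by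
  rw [sp2, if_neg (by omega), if_neg (by omega), if_neg (by omega), h]
  simp [if_neg (by omega : ¬ n = 3)]

lemma hleg : ∀ n c, playCfg2One A15 B15 σ15 (sp2 D) (dmf D) n = some c →
    A15.trans c.qa (sp2 D n).1 (sp2 D n).2 := by
  intro n c hc
  match n with
  | 0 =>
    have : c = ⟨A15.init,[],[],B15.init⟩ := by
      rw [playCfg2One] at hc; injection hc with h; rw [h]
    rw [this, sp2_0]
    simp [A15]
  | (k+1) =>
    have hqa := play_qa _ _ k c hc
    rw [hqa]
    match k with
    | 0 => rw [sp2_0, sp2_1]; simp [A15]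
    | 1 => rw [sp2_1, sp2_2]; simp [A15]
    | 2 =>
      rw [sp2_2]
      rcases hs : side D
      · rw [sp2_3f D hs]; simp [A15]
      · rw [sp2_3t D hs]; simp [A15]
    | (m+3) =>
      rcases hs : side D
      · rcases Nat.eq_or_lt_of_le (Nat.le_refl 0) with h | h
        · match m with
          | 0 => rw [sp2_3f D hs, sp2_ge4f D hs 4 (by omega)]; simp [A15]
          | (l+1) =>
            rw [sp2_ge4f D hs (l+1+3) (by omega), sp2_ge4f D hs (l+1+3+1) (by omega)]
            simp [A15]
        · match m with
          | 0 => rw [sp2_3f D hs, sp2_ge4f D hs 4 (by omega)]; simp [A15]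
          | (l+1) =>
            rw [sp2_ge4f D hs (l+1+3) (by omega), sp2_ge4f D hs (l+1+3+1) (by omega)]
            simp [A15]
      · rw [sp2_ge3t D hs (m+3) (by omega), sp2_ge3t D hs (m+3+1) (by omega)]
        simp [A15]

end Main2

section Main3
variable (D : List ((L15 × A15.Q) × Option (Bool × B15.Q)) → (L15 × A15.Q) → Option (Bool × B15.Q))

lemma ne51 : ¬ (5 : B15.Q) = 1 := by exact (by simp : ¬(5:Fin 9) = 1)

lemma side_true (h : d0 D = some (true,1) ∨ d1 D = some (true,1) ∨ d2 D = some (true,1)) :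
    side D = true := by rw [side, if_pos h]

lemma side_false (h0 : d0 D ≠ some (true,1)) (h1 : d1 D ≠ some (true,1))
    (h2 : d2 D ≠ some (true,1)) : side D = false := by
  rw [side, if_neg]
  rintro (h | h | h) <;> contradiction

lemma part2 : ¬ Sim2One A15 B15 σ15 ⊤ 1 := by
  rintro ⟨D, hD⟩
  obtain ⟨H1, H2, H3⟩ := hD (sp2 D) (dmf D) (hcons D) (hleg D)
  -- helper to extract Hacc when side is false
  have haccf : side D = false →
      ∀ n, ∃ m, n ≤ m ∧ ∃ x ∈ dmf D m, B15.acc x.2 := by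
    intro hs
    rcases H3 with ⟨N, hN⟩ | ⟨-, Hacc⟩
    · exfalso
      refine hN (N+4) (by omega) ?_
      rw [sp2_ge4f D hs (N+4) (by omega)]
      simp [A15]
    · exact Hacc
  have hacct : side D = true →
      ∀ n, ∃ m, n ≤ m ∧ ∃ x ∈ dmf D m, B15.acc x.2 := by
    intro hs
    rcases H3 with ⟨N, hN⟩ | ⟨-, Hacc⟩
    · exfalso
      refine hN (N+4) (by omega) ?_
      rw [sp2_ge3t D hs (N+4) (by omega)]
      simp [A15]
    · exact Hacc
  have hc0 : playCfg2One A15 B15 σ15 (sp2 D) (dmf D) 0 = some ⟨0,[],[],0⟩ := rfl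
  -- round 0
  obtain ⟨c1, hc1⟩ := Option.isSome_iff_exists.mp (H1 1)
  have hst0 := pstep2 (sp2 D) (dmf D) 0 _ hc0
  rw [sp2_0, if_pos (by simp [A15])] at hst0
  simp only [midCfg, σ15] at hst0
  rcases h0 : dmf D 0 with _ | ⟨j0, p0⟩ <;> rw [h0] at hst0
  next =>
    simp only [Option.toList, dupApply] at hst0
    -- play 1 = some ⟨1,[a],[],0⟩
    obtain ⟨c2, hc2⟩ := Option.isSome_iff_exists.mp (H1 2)
    have hst1 := pstep2 (sp2 D) (dmf D) 1 _ hst0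
    rw [sp2_1, if_pos (by simp [A15])] at hst1
    simp only [midCfg, σ15] at hst1
    rcases h1 : dmf D 1 with _ | ⟨j1, p1⟩ <;> rw [h1] at hst1
    next =>
      simp only [Option.toList, dupApply] at hst1
      -- play 2 = some ⟨2,[a,a],[],0⟩
      obtain ⟨c3, hc3⟩ := Option.isSome_iff_exists.mp (H1 3)
      have hst2 := pstep2 (sp2 D) (dmf D) 2 _ hst1
      rw [sp2_2, if_pos (by simp [A15])] at hst2
      simp only [midCfg, σ15] at hst2
      rcases h2 : dmf D 2 with _ | ⟨j2, p2⟩ <;> rw [h2] at hst2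
      next =>
        simp only [Option.toList, dupApply] at hst2
        have hs : side D = false := side_false D
          (by rw [← dmf0, h0]; simp [ne51]) (by rw [← dmf1, h1]; simp [ne51]) (by rw [← dmf2, h2]; simp [ne51])
        exact class0 (sp2 D) (dmf D) hst2 (sp2_3f D hs) H1 H2
      next =>
        cases j2
        next =>
          rw [hc3] at hst2
          simp [dupApply] at hst2
          exact absurd (trB0 hst2.1).1 (by simp)
        next =>
          rw [hc3] at hst2
          simp [dupApply] at hst2
          obtain ⟨htr, hceq⟩ := hst2
          obtain ⟨-, hp⟩ := trB0 htr
          rcases hp with hp | hp <;> subst hp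
          · have hs : side D = true := side_true D (Or.inr (Or.inr (by rw [← dmf2, h2]; rfl)))
            exact class1 (sp2 D) (dmf D) (by rw [hc3, hceq]; rfl)
              (fun n hn => sp2_ge3t D hs n hn) H1 H2
          · have hs : side D = false := side_false D
              (by rw [← dmf0, h0]; simp [ne51]) (by rw [← dmf1, h1]; simp [ne51]) (by rw [← dmf2, h2]; simp [ne51]; exact fun h => ne51 (congrArg Prod.snd h))
            exact class3 (sp2 D) (dmf D) (by rw [hc3, hceq]; rfl) (sp2_3f D hs)
              (fun m hm => sp2_ge4f D hs m hm) H1 H2 (haccf hs)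
    next =>
      cases j1
      next =>
        rw [hc2] at hst1
        simp [dupApply] at hst1
      next =>
        rw [hc2] at hst1
        simp [dupApply] at hst1
        obtain ⟨htr, hceq⟩ := hst1
        obtain ⟨-, hp⟩ := trB0 htr
        rcases hp with hp | hp <;> subst hp
        · -- committed p1 at round 1
          have hs : side D = true := side_true D (Or.inr (Or.inl (by rw [← dmf1, h1]; rfl)))
          -- play 2 = some ⟨2,[a],[],1⟩
          obtain ⟨c3, hc3⟩ := Option.isSome_iff_exists.mp (H1 3)
          have hst2 := pstep2 (sp2 D) (dmf D) 2 _ (by rw [hc2, hceq])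
          rw [sp2_2, if_pos (by simp [A15])] at hst2
          simp only [midCfg, σ15] at hst2
          rcases h2 : dmf D 2 with _ | ⟨j2, p2⟩ <;> rw [h2] at hst2
          next =>
            simp only [Option.toList, dupApply] at hst2
            exact class1 (sp2 D) (dmf D) hst2 (fun n hn => sp2_ge3t D hs n hn) H1 H2
          next =>
            cases j2
            next =>
              rw [hc3] at hst2
              simp [dupApply] at hst2
              obtain ⟨htr2, hceq2⟩ := hst2
              obtain ⟨-, hp2⟩ := trB1 htr2
              subst hp2
              exact class2 (sp2 D) (dmf D) (by rw [hc3, hceq2]; rfl)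
                (fun n hn => sp2_ge3t D hs n hn) H1 H2
            next =>
              rw [hc3] at hst2
              simp [dupApply] at hst2
              exact absurd (trB1 hst2.1).1 (by simp)
        · -- committed p5 at round 1
          have hs5 : dmf D 1 = some (true,5) := h1
          obtain ⟨c3, hc3⟩ := Option.isSome_iff_exists.mp (H1 3)
          have hst2 := pstep2 (sp2 D) (dmf D) 2 _ (by rw [hc2, hceq])
          rw [sp2_2, if_pos (by simp [A15])] at hst2
          simp only [midCfg, σ15] at hst2
          rcases h2 : dmf D 2 with _ | ⟨j2, p2⟩ <;> rw [h2] at hst2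
          next =>
            simp only [Option.toList, dupApply] at hst2
            have hs : side D = false := side_false D
              (by rw [← dmf0, h0]; simp [ne51]) (by rw [← dmf1, h1]; simp [ne51]; exact fun h => ne51 (congrArg Prod.snd h)) (by rw [← dmf2, h2]; simp [ne51])
            exact class3 (sp2 D) (dmf D) hst2 (sp2_3f D hs)
              (fun m hm => sp2_ge4f D hs m hm) H1 H2 (haccf hs)
          next =>
            cases j2
            next =>
              rw [hc3] at hst2
              simp [dupApply] at hst2
              obtain ⟨htr2, hceq2⟩ := hst2
              obtain ⟨-, hp2⟩ := trB5 htr2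
              subst hp2
              have hs : side D = false := side_false D
                (by rw [← dmf0, h0]; simp [ne51]) (by rw [← dmf1, h1]; simp [ne51]; exact fun h => ne51 (congrArg Prod.snd h)) (by rw [← dmf2, h2]; simp [ne51]; exact fun h => Bool.false_ne_true (congrArg Prod.fst h))
              exact class4 (sp2 D) (dmf D) (by rw [hc3, hceq2]; rfl) (sp2_3f D hs)
                (fun m hm => sp2_ge4f D hs m hm) H1 H2 (haccf hs)
            next =>
              rw [hc3] at hst2
              simp [dupApply] at hst2
              exact absurd (trB5 hst2.1).1 (by simp)
  next =>
    cases j0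
    next =>
      rw [hc1] at hst0
      simp [dupApply] at hst0
    next =>
      rw [hc1] at hst0
      simp [dupApply] at hst0
      obtain ⟨htr, hceq⟩ := hst0
      obtain ⟨-, hp⟩ := trB0 htr
      rcases hp with hp | hp <;> subst hp
      · -- committed p1 at round 0
        have hs : side D = true := side_true D (Or.inl (by rw [← dmf0, h0]; rfl))
        obtain ⟨c2, hc2⟩ := Option.isSome_iff_exists.mp (H1 2)
        have hst1 := pstep2 (sp2 D) (dmf D) 1 _ (by rw [hc1, hceq])
        rw [sp2_1, if_pos (by simp [A15])] at hst1
        simp only [midCfg, σ15] at hst1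
        rcases h1 : dmf D 1 with _ | ⟨j1, p1⟩ <;> rw [h1] at hst1
        next =>
          simp only [Option.toList, dupApply] at hst1
          -- play 2 = some ⟨2,[a],[],1⟩
          obtain ⟨c3, hc3⟩ := Option.isSome_iff_exists.mp (H1 3)
          have hst2 := pstep2 (sp2 D) (dmf D) 2 _ hst1
          rw [sp2_2, if_pos (by simp [A15])] at hst2
          simp only [midCfg, σ15] at hst2
          rcases h2 : dmf D 2 with _ | ⟨j2, p2⟩ <;> rw [h2] at hst2
          next =>
            simp only [Option.toList, dupApply] at hst2
            exact class1 (sp2 D) (dmf D) hst2 (fun n hn => sp2_ge3t D hs n hn) H1 H2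
          next =>
            cases j2
            next =>
              rw [hc3] at hst2
              simp [dupApply] at hst2
              obtain ⟨htr2, hceq2⟩ := hst2
              obtain ⟨-, hp2⟩ := trB1 htr2
              subst hp2
              exact class2 (sp2 D) (dmf D) (by rw [hc3, hceq2]; rfl)
                (fun n hn => sp2_ge3t D hs n hn) H1 H2
            next =>
              rw [hc3] at hst2
              simp [dupApply] at hst2
              exact absurd (trB1 hst2.1).1 (by simp)
        next =>
          cases j1
          next =>
            rw [hc2] at hst1
            simp [dupApply] at hst1
          next =>
            rw [hc2] at hst1
            simp [dupApply] at hst1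
            exact absurd (trB1 hst1.1).1 (by simp)
      · -- committed p5 at round 0
        obtain ⟨c2, hc2⟩ := Option.isSome_iff_exists.mp (H1 2)
        have hst1 := pstep2 (sp2 D) (dmf D) 1 _ (by rw [hc1, hceq])
        rw [sp2_1, if_pos (by simp [A15])] at hst1
        simp only [midCfg, σ15] at hst1
        rcases h1 : dmf D 1 with _ | ⟨j1, p1⟩ <;> rw [h1] at hst1
        next =>
          simp only [Option.toList, dupApply] at hst1
          -- play 2 = some ⟨2,[a],[],5⟩
          obtain ⟨c3, hc3⟩ := Option.isSome_iff_exists.mp (H1 3)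
          have hst2 := pstep2 (sp2 D) (dmf D) 2 _ hst1
          rw [sp2_2, if_pos (by simp [A15])] at hst2
          simp only [midCfg, σ15] at hst2
          rcases h2 : dmf D 2 with _ | ⟨j2, p2⟩ <;> rw [h2] at hst2
          next =>
            simp only [Option.toList, dupApply] at hst2
            have hs : side D = false := side_false D
              (by rw [← dmf0, h0]; simp [ne51]; exact fun h => ne51 (congrArg Prod.snd h)) (by rw [← dmf1, h1]; simp [ne51]) (by rw [← dmf2, h2]; simp [ne51])
            exact class3 (sp2 D) (dmf D) hst2 (sp2_3f D hs)
              (fun m hm => sp2_ge4f D hs m hm) H1 H2 (haccf hs)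
          next =>
            cases j2
            next =>
              rw [hc3] at hst2
              simp [dupApply] at hst2
              obtain ⟨htr2, hceq2⟩ := hst2
              obtain ⟨-, hp2⟩ := trB5 htr2
              subst hp2
              have hs : side D = false := side_false D
                (by rw [← dmf0, h0]; simp [ne51]; exact fun h => ne51 (congrArg Prod.snd h)) (by rw [← dmf1, h1]; simp [ne51]) (by rw [← dmf2, h2]; simp [ne51]; exact fun h => Bool.false_ne_true (congrArg Prod.fst h))
              exact class4 (sp2 D) (dmf D) (by rw [hc3, hceq2]; rfl) (sp2_3f D hs)
                (fun m hm => sp2_ge4f D hs m hm) H1 H2 (haccf hs)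
            next =>
              rw [hc3] at hst2
              simp [dupApply] at hst2
              exact absurd (trB5 hst2.1).1 (by simp)
        next =>
          cases j1
          next =>
            rw [hc2] at hst1
            simp [dupApply] at hst1
          next =>
            rw [hc2] at hst1
            simp [dupApply] at hst1
            exact absurd (trB5 hst1.1).1 (by simp)

end Main3


/-- On the automata `𝒜`, `ℬ` above, Duplicator wins the two-buffer
game with capacities `(ω, 1)` when she may consume several letters per round, but
loses when restricted to at most one letter per round. -/
theorem multi_consumption_needed :
    Sim2 A15 B15 σ15 ⊤ 1 ∧ ¬ Sim2One A15 B15 σ15 ⊤ 1 := ⟨part1, part2⟩
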